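/- Let p ≠ q be natural numbers, let θ ∈ ℝ with cos θ ≠ 0 and sin θ ≠ 0, and define Φ(θ,x,y) = cos θ · cos(px)·cos(qy) + sin θ · cos(py)·cos(qx). Suppose y₀ ∈ ℝ satisfies Φ(θ,0,y₀) = 0 and cos(p·y₀) ≠ 0. Then: (a) the second partial derivative of Φ in x at (θ,0,y₀) equals sin θ · cos(p·y₀) · (p² − q²); (b) the second partial derivative of Φ in y at (θ,0,y₀) equals sin θ · cos(p·y₀) · (q² − p²); (c) the mixed second partial derivative of Φ in x and y at (θ,0,y₀) equals 0; (d) the partial derivative of Φ in θ at (θ,0,y₀) equals cos(p·y₀)/cos θ. In particular the Hessian of (x,y) ↦ Φ(θ,x,y) at (0,y₀) is nondegenerate and indefinite, and ∂_θ Φ(θ,0,y₀) ≠ 0. -/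

import Mathlib

open Real

private lemma hd_cos (c t : ℝ) :
    HasDerivAt (fun x => Real.cos (c * x)) (-(c * Real.sin (c * t))) t := by
  have h := (Real.hasDerivAt_cos (c * t)).comp t ((hasDerivAt_id t).const_mul c)
  simpa [Function.comp_def, mul_comm, mul_assoc, mul_left_comm] using h

private lemma hd_sin (c t : ℝ) :
    HasDerivAt (fun x => Real.sin (c * x)) (c * Real.cos (c * t)) t := by
  have h := (Real.hasDerivAt_sin (c * t)).comp t ((hasDerivAt_id t).const_mul c)
  simpa [Function.comp_def, mul_comm, mul_assoc, mul_left_comm] using h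

private lemma d1 (a b c d t : ℝ) :
    deriv (fun x => a * Real.cos (c * x) + b * Real.cos (d * x)) t
      = -(a * (c * Real.sin (c * t))) + -(b * (d * Real.sin (d * t))) := by
  have := (((hd_cos c t).const_mul a).add ((hd_cos d t).const_mul b)).deriv
  erw [this]; ring

private lemma d2 (a b c d t : ℝ) :
    deriv (deriv (fun x => a * Real.cos (c * x) + b * Real.cos (d * x))) t
      = -(a * c ^ 2 * Real.cos (c * t)) - b * d ^ 2 * Real.cos (d * t) := by
  have h : deriv (fun x => a * Real.cos (c * x) + b * Real.cos (d * x))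
      = fun s => (-(a * c)) * Real.sin (c * s) + (-(b * d)) * Real.sin (d * s) := by
    funext s; rw [d1]; ring
  rw [h]
  have := (((hd_sin c t).const_mul (-(a * c))).add ((hd_sin d t).const_mul (-(b * d)))).deriv
  erw [this]; ring

theorem stmt_13 (p q : ℕ) (hpq : p ≠ q) (θ y₀ : ℝ)
    (hc : Real.cos θ ≠ 0) (hs : Real.sin θ ≠ 0)
    (Φ : ℝ → ℝ → ℝ → ℝ)
    (hΦ : ∀ θ' x y : ℝ, Φ θ' x y =
      Real.cos θ' * (Real.cos ((p : ℝ) * x) * Real.cos ((q : ℝ) * y)) +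
      Real.sin θ' * (Real.cos ((p : ℝ) * y) * Real.cos ((q : ℝ) * x)))
    (h0 : Φ θ 0 y₀ = 0) (hcp : Real.cos ((p : ℝ) * y₀) ≠ 0) :
    deriv (deriv (fun x => Φ θ x y₀)) 0 =
        Real.sin θ * Real.cos ((p : ℝ) * y₀) * ((p : ℝ) ^ 2 - (q : ℝ) ^ 2) ∧
    deriv (deriv (fun y => Φ θ 0 y)) y₀ =
        Real.sin θ * Real.cos ((p : ℝ) * y₀) * ((q : ℝ) ^ 2 - (p : ℝ) ^ 2) ∧
    deriv (fun x => deriv (fun y => Φ θ x y) y₀) 0 = 0 ∧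
    deriv (fun θ' => Φ θ' 0 y₀) θ = Real.cos ((p : ℝ) * y₀) / Real.cos θ ∧
    -- the Hessian of (x,y) ↦ Φ θ x y at (0,y₀) is nondegenerate and indefinite:
    -- its determinant is negative
    deriv (deriv (fun x => Φ θ x y₀)) 0 * deriv (deriv (fun y => Φ θ 0 y)) y₀ -
        (deriv (fun x => deriv (fun y => Φ θ x y) y₀) 0) ^ 2 < 0 ∧
    deriv (fun θ' => Φ θ' 0 y₀) θ ≠ 0 := by
  have hAB : Real.cos θ * Real.cos ((q : ℝ) * y₀)
      + Real.sin θ * Real.cos ((p : ℝ) * y₀) = 0 := by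
    have h := h0; rw [hΦ] at h; simpa using h
  set B := Real.sin θ * Real.cos ((p : ℝ) * y₀) with hB
  have hAeq : Real.cos θ * Real.cos ((q : ℝ) * y₀) = -B := by linarith
  -- (a)
  have ha : deriv (deriv (fun x => Φ θ x y₀)) 0 = B * ((p : ℝ) ^ 2 - (q : ℝ) ^ 2) := by
    have hf : (fun x => Φ θ x y₀)
        = fun x => (Real.cos θ * Real.cos ((q : ℝ) * y₀)) * Real.cos ((p : ℝ) * x)
            + (Real.sin θ * Real.cos ((p : ℝ) * y₀)) * Real.cos ((q : ℝ) * x) := by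
      funext x; rw [hΦ]; ring
    rw [hf, d2, hAeq, ← hB]
    simp; ring
  -- (b)
  have hb : deriv (deriv (fun y => Φ θ 0 y)) y₀ = B * ((q : ℝ) ^ 2 - (p : ℝ) ^ 2) := by
    have hf : (fun y => Φ θ 0 y)
        = fun y => Real.cos θ * Real.cos ((q : ℝ) * y) + Real.sin θ * Real.cos ((p : ℝ) * y) := by
      funext y; rw [hΦ]; simp
    rw [hf, d2]
    have h1 : Real.cos θ * 1 = Real.cos θ := mul_one _
    nlinarith [hAeq]
  -- (c)
  have hmix : deriv (fun x => deriv (fun y => Φ θ x y) y₀) 0 = 0 := by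
    have hf : (fun x => deriv (fun y => Φ θ x y) y₀)
        = fun x => (-(Real.cos θ * ((q : ℝ) * Real.sin ((q : ℝ) * y₀)))) * Real.cos ((p : ℝ) * x)
            + (-(Real.sin θ * ((p : ℝ) * Real.sin ((p : ℝ) * y₀)))) * Real.cos ((q : ℝ) * x) := by
      funext x
      have hg : (fun y => Φ θ x y)
          = fun y => (Real.cos θ * Real.cos ((p : ℝ) * x)) * Real.cos ((q : ℝ) * y)
              + (Real.sin θ * Real.cos ((q : ℝ) * x)) * Real.cos ((p : ℝ) * y) := by
        funext y; rw [hΦ]; ring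
      rw [hg, d1]; ring
    rw [hf, d1]; simp
  -- (d)
  have hd : deriv (fun θ' => Φ θ' 0 y₀) θ = Real.cos ((p : ℝ) * y₀) / Real.cos θ := by
    have hf : (fun θ' => Φ θ' 0 y₀)
        = fun θ' => Real.cos θ' * Real.cos ((q : ℝ) * y₀)
            + Real.sin θ' * Real.cos ((p : ℝ) * y₀) := by
      funext θ'; rw [hΦ]; simp
    have hder := (((Real.hasDerivAt_cos θ).mul_const (Real.cos ((q : ℝ) * y₀))).add
      ((Real.hasDerivAt_sin θ).mul_const (Real.cos ((p : ℝ) * y₀)))).deriv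
    rw [hf]; erw [hder]
    have hsc := Real.sin_sq_add_cos_sq θ
    have hAeq' : Real.cos θ * Real.cos ((q : ℝ) * y₀)
        = -(Real.sin θ * Real.cos ((p : ℝ) * y₀)) := by rw [hAeq, hB]
    rw [eq_div_iff hc]
    linear_combination (-Real.sin θ) * hAeq' + Real.cos ((p : ℝ) * y₀) * hsc
  -- p² ≠ q² over ℝ
  have hB0 : B ≠ 0 := mul_ne_zero hs hcp
  have hpq2 : ((p : ℝ) ^ 2 - (q : ℝ) ^ 2) ≠ 0 := by
    intro h
    apply hpq
    have hp : (0:ℝ) ≤ (p:ℝ) := Nat.cast_nonneg p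
    have hq : (0:ℝ) ≤ (q:ℝ) := Nat.cast_nonneg q
    have : (p:ℝ) = q := by nlinarith
    exact_mod_cast this
  refine ⟨ha, hb, hmix, hd, ?_, ?_⟩
  · rw [ha, hb, hmix]
    have h1 : (0:ℝ) < B ^ 2 * ((p : ℝ) ^ 2 - (q : ℝ) ^ 2) ^ 2 := by positivity
    nlinarith
  · rw [hd]; exact div_ne_zero hcp hc
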